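/- Let $d$ be the pseudo-metric on graded linear subspaces as above, and suppose $W^i \to W$ and $V^i \to V$ in the pseudo-metric $d$ (i.e., $d(W^i, W) \to 0$ and $d(V^i, V) \to 0$). Then $W^i \cap V^i \to W \cap V$ and $W^i + V^i \to W + V$. -/

import Mathlib

open Filter Module

/-- The pseudo-distance between two graded linear subspaces:
`d(W,W') = limsup_k k⁻ⁿ (2 dim(W_k + W'_k) - dim W_k - dim W'_k)`. -/
noncomputable def gradedDist {𝕜 : Type*} [Field 𝕜] {V : ℕ → Type*}
    [∀ k, AddCommGroup (V k)] [∀ k, Module 𝕜 (V k)] [∀ k, FiniteDimensional 𝕜 (V k)]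
    (n : ℕ) (W W' : ∀ k, Submodule 𝕜 (V k)) : ℝ :=
  limsup (fun k : ℕ =>
    (2 * (Module.finrank 𝕜 (W k ⊔ W' k : Submodule 𝕜 (V k)) : ℝ)
      - Module.finrank 𝕜 (W k) - Module.finrank 𝕜 (W' k)) / (k : ℝ) ^ n) atTop

set_option linter.unusedSectionVars false

section DeltaLemmas
variable {𝕜 : Type*} [Field 𝕜] {M : Type*} [AddCommGroup M] [Module 𝕜 M]
  [FiniteDimensional 𝕜 M]

/-- The dimension pseudo-metric on submodules. -/
noncomputable def sdelta (A B : Submodule 𝕜 M) : ℝ :=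
  2 * (finrank 𝕜 (A ⊔ B : Submodule 𝕜 M) : ℝ) - finrank 𝕜 A - finrank 𝕜 B

lemma sdelta_nonneg (A B : Submodule 𝕜 M) : 0 ≤ sdelta A B := by
  have h1 : finrank 𝕜 A ≤ finrank 𝕜 (A ⊔ B : Submodule 𝕜 M) :=
    Submodule.finrank_mono le_sup_left
  have h2 : finrank 𝕜 B ≤ finrank 𝕜 (A ⊔ B : Submodule 𝕜 M) :=
    Submodule.finrank_mono le_sup_right
  unfold sdelta
  have h1' : (finrank 𝕜 A : ℝ) ≤ finrank 𝕜 (A ⊔ B : Submodule 𝕜 M) := by exact_mod_cast h1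
  have h2' : (finrank 𝕜 B : ℝ) ≤ finrank 𝕜 (A ⊔ B : Submodule 𝕜 M) := by exact_mod_cast h2
  linarith

lemma sdelta_comm (A B : Submodule 𝕜 M) : sdelta A B = sdelta B A := by
  unfold sdelta; rw [sup_comm]; ring

lemma sdelta_le_two_finrank (A B : Submodule 𝕜 M) :
    sdelta A B ≤ 2 * (finrank 𝕜 M : ℝ) := by
  have h1 : finrank 𝕜 (A ⊔ B : Submodule 𝕜 M) ≤ finrank 𝕜 M := (A ⊔ B).finrank_le
  have h1' : (finrank 𝕜 (A ⊔ B : Submodule 𝕜 M) : ℝ) ≤ finrank 𝕜 M := by exact_mod_cast h1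
  have h2 : (0:ℝ) ≤ finrank 𝕜 A := by positivity
  have h3 : (0:ℝ) ≤ finrank 𝕜 B := by positivity
  unfold sdelta; linarith

lemma sdelta_triangle (A B C : Submodule 𝕜 M) :
    sdelta A C ≤ sdelta A B + sdelta B C := by
  have hmod := Submodule.finrank_sup_add_finrank_inf_eq (A ⊔ B) (B ⊔ C)
  have h2 : finrank 𝕜 B ≤ finrank 𝕜 ((A ⊔ B) ⊓ (B ⊔ C) : Submodule 𝕜 M) :=
    Submodule.finrank_mono (le_inf le_sup_right le_sup_left)
  have h3 : finrank 𝕜 (A ⊔ C : Submodule 𝕜 M) ≤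
      finrank 𝕜 ((A ⊔ B) ⊔ (B ⊔ C) : Submodule 𝕜 M) :=
    Submodule.finrank_mono (sup_le (le_sup_left.trans le_sup_left)
      (le_sup_right.trans le_sup_right))
  have hmod' : (finrank 𝕜 ((A ⊔ B) ⊔ (B ⊔ C) : Submodule 𝕜 M) : ℝ)
      + finrank 𝕜 ((A ⊔ B) ⊓ (B ⊔ C) : Submodule 𝕜 M)
      = finrank 𝕜 (A ⊔ B : Submodule 𝕜 M) + finrank 𝕜 (B ⊔ C : Submodule 𝕜 M) := by
    exact_mod_cast hmod
  have h2' : (finrank 𝕜 B : ℝ) ≤ finrank 𝕜 ((A ⊔ B) ⊓ (B ⊔ C) : Submodule 𝕜 M) := by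
    exact_mod_cast h2
  have h3' : (finrank 𝕜 (A ⊔ C : Submodule 𝕜 M) : ℝ) ≤
      finrank 𝕜 ((A ⊔ B) ⊔ (B ⊔ C) : Submodule 𝕜 M) := by exact_mod_cast h3
  unfold sdelta; linarith

lemma sdelta_inf_mono {A B : Submodule 𝕜 M} (h : A ≤ B) (Z : Submodule 𝕜 M) :
    sdelta (A ⊓ Z) (B ⊓ Z) ≤ sdelta A B := by
  have hAZ : A ⊓ Z ≤ B ⊓ Z := inf_le_inf_right Z h
  have hsup1 : (A ⊓ Z) ⊔ (B ⊓ Z) = B ⊓ Z := sup_eq_right.mpr hAZ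
  have hsup2 : A ⊔ B = B := sup_eq_right.mpr h
  have hmod := Submodule.finrank_sup_add_finrank_inf_eq (B ⊓ Z) A
  have heq : (B ⊓ Z) ⊓ A = A ⊓ Z :=
    le_antisymm (le_inf inf_le_right (inf_le_left.trans inf_le_right))
      (le_inf hAZ inf_le_left)
  rw [heq] at hmod
  have hle : finrank 𝕜 ((B ⊓ Z) ⊔ A : Submodule 𝕜 M) ≤ finrank 𝕜 B :=
    Submodule.finrank_mono (sup_le inf_le_left h)
  have hmod' : (finrank 𝕜 ((B ⊓ Z) ⊔ A : Submodule 𝕜 M) : ℝ)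
      + finrank 𝕜 (A ⊓ Z : Submodule 𝕜 M)
      = finrank 𝕜 (B ⊓ Z : Submodule 𝕜 M) + finrank 𝕜 A := by exact_mod_cast hmod
  have hle' : (finrank 𝕜 ((B ⊓ Z) ⊔ A : Submodule 𝕜 M) : ℝ) ≤ finrank 𝕜 B := by
    exact_mod_cast hle
  unfold sdelta; rw [hsup1, hsup2]; linarith

lemma sdelta_sup_mono {A B : Submodule 𝕜 M} (h : A ≤ B) (Z : Submodule 𝕜 M) :
    sdelta (A ⊔ Z) (B ⊔ Z) ≤ sdelta A B := by
  have hAZ : A ⊔ Z ≤ B ⊔ Z := sup_le_sup_right h Z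
  have hsup1 : (A ⊔ Z) ⊔ (B ⊔ Z) = B ⊔ Z := sup_eq_right.mpr hAZ
  have hsup2 : A ⊔ B = B := sup_eq_right.mpr h
  have hmod := Submodule.finrank_sup_add_finrank_inf_eq (A ⊔ Z) B
  have heq : (A ⊔ Z) ⊔ B = B ⊔ Z :=
    le_antisymm (sup_le (sup_le (h.trans le_sup_left) le_sup_right) le_sup_left)
      (sup_le le_sup_right (le_sup_right.trans le_sup_left))
  rw [heq] at hmod
  have hge : finrank 𝕜 A ≤ finrank 𝕜 ((A ⊔ Z) ⊓ B : Submodule 𝕜 M) :=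
    Submodule.finrank_mono (le_inf le_sup_left h)
  have hmod' : (finrank 𝕜 (B ⊔ Z : Submodule 𝕜 M) : ℝ)
      + finrank 𝕜 ((A ⊔ Z) ⊓ B : Submodule 𝕜 M)
      = finrank 𝕜 (A ⊔ Z : Submodule 𝕜 M) + finrank 𝕜 B := by exact_mod_cast hmod
  have hge' : (finrank 𝕜 A : ℝ) ≤ finrank 𝕜 ((A ⊔ Z) ⊓ B : Submodule 𝕜 M) := by
    exact_mod_cast hge
  unfold sdelta; rw [hsup1, hsup2]; linarith

lemma sdelta_inf_contract (A B Z : Submodule 𝕜 M) :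
    sdelta (A ⊓ Z) (B ⊓ Z) ≤ sdelta A B := by
  have h1 : sdelta (A ⊓ Z) ((A ⊔ B) ⊓ Z) ≤ sdelta A (A ⊔ B) :=
    sdelta_inf_mono le_sup_left Z
  have h2 : sdelta (B ⊓ Z) ((A ⊔ B) ⊓ Z) ≤ sdelta B (A ⊔ B) :=
    sdelta_inf_mono le_sup_right Z
  have htri := sdelta_triangle (A ⊓ Z) ((A ⊔ B) ⊓ Z) (B ⊓ Z)
  have hsum : sdelta A (A ⊔ B) + sdelta B (A ⊔ B) = sdelta A B := by
    unfold sdelta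
    rw [sup_eq_right.mpr (le_sup_left : A ≤ A ⊔ B),
      sup_eq_right.mpr (le_sup_right : B ≤ A ⊔ B)]
    ring
  rw [sdelta_comm ((A ⊔ B) ⊓ Z) (B ⊓ Z)] at htri
  linarith

lemma sdelta_sup_contract (A B Z : Submodule 𝕜 M) :
    sdelta (A ⊔ Z) (B ⊔ Z) ≤ sdelta A B := by
  have h1 : sdelta (A ⊔ Z) ((A ⊔ B) ⊔ Z) ≤ sdelta A (A ⊔ B) :=
    sdelta_sup_mono le_sup_left Z
  have h2 : sdelta (B ⊔ Z) ((A ⊔ B) ⊔ Z) ≤ sdelta B (A ⊔ B) :=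
    sdelta_sup_mono le_sup_right Z
  have htri := sdelta_triangle (A ⊔ Z) ((A ⊔ B) ⊔ Z) (B ⊔ Z)
  have hsum : sdelta A (A ⊔ B) + sdelta B (A ⊔ B) = sdelta A B := by
    unfold sdelta
    rw [sup_eq_right.mpr (le_sup_left : A ≤ A ⊔ B),
      sup_eq_right.mpr (le_sup_right : B ≤ A ⊔ B)]
    ring
  rw [sdelta_comm ((A ⊔ B) ⊔ Z) (B ⊔ Z)] at htri
  linarith

lemma sdelta_inf_le (A B C D : Submodule 𝕜 M) :
    sdelta (A ⊓ C) (B ⊓ D) ≤ sdelta A B + sdelta C D := by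
  have h1 : sdelta (A ⊓ C) (A ⊓ D) ≤ sdelta C D := by
    rw [inf_comm A C, inf_comm A D]; exact sdelta_inf_contract C D A
  have h2 : sdelta (A ⊓ D) (B ⊓ D) ≤ sdelta A B := sdelta_inf_contract A B D
  have := sdelta_triangle (A ⊓ C) (A ⊓ D) (B ⊓ D)
  linarith

lemma sdelta_sup_le (A B C D : Submodule 𝕜 M) :
    sdelta (A ⊔ C) (B ⊔ D) ≤ sdelta A B + sdelta C D := by
  have h1 : sdelta (A ⊔ C) (A ⊔ D) ≤ sdelta C D := by
    rw [sup_comm A C, sup_comm A D]; exact sdelta_sup_contract C D A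
  have h2 : sdelta (A ⊔ D) (B ⊔ D) ≤ sdelta A B := sdelta_sup_contract A B D
  have := sdelta_triangle (A ⊔ C) (A ⊔ D) (B ⊔ D)
  linarith

end DeltaLemmas

section Main

variable {𝕜 : Type*} [Field 𝕜] {V : ℕ → Type*}
    [∀ k, AddCommGroup (V k)] [∀ k, Module 𝕜 (V k)] [∀ k, FiniteDimensional 𝕜 (V k)]

lemma gradedDist_eq (n : ℕ) (W W' : ∀ k, Submodule 𝕜 (V k)) :
    gradedDist n W W' = limsup (fun k : ℕ => sdelta (W k) (W' k) / (k : ℝ) ^ n) atTop := rfl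

variable {n : ℕ} (hn : 1 ≤ n) {C : ℝ}
  (hC : ∀ k : ℕ, 1 ≤ k → (Module.finrank 𝕜 (V k) : ℝ) ≤ C * (k : ℝ) ^ n)

include hn hC in
lemma term_bounds (A B : ∀ k, Submodule 𝕜 (V k)) (k : ℕ) :
    0 ≤ sdelta (A k) (B k) / (k : ℝ) ^ n ∧ sdelta (A k) (B k) / (k : ℝ) ^ n ≤ 2 * C := by
  have hC0 : 0 ≤ C := by
    have h1 := hC 1 le_rfl
    have : (0:ℝ) ≤ finrank 𝕜 (V 1) := by positivity
    simpa using this.trans h1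
  rcases Nat.eq_zero_or_pos k with hk | hk
  · subst hk
    rw [show ((0:ℕ):ℝ) = 0 by norm_num, zero_pow (by omega : n ≠ 0), div_zero]
    exact ⟨le_rfl, by linarith⟩
  · have hkpos : (0:ℝ) < (k:ℝ) ^ n := by positivity
    constructor
    · exact div_nonneg (sdelta_nonneg _ _) hkpos.le
    · rw [div_le_iff₀ hkpos]
      calc sdelta (A k) (B k) ≤ 2 * (finrank 𝕜 (V k) : ℝ) := sdelta_le_two_finrank _ _
        _ ≤ 2 * (C * (k:ℝ)^n) := by linarith [hC k hk]
        _ = 2 * C * (k:ℝ)^n := by ring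

include hn hC in
lemma gradedDist_nonneg (A B : ∀ k, Submodule 𝕜 (V k)) : 0 ≤ gradedDist n A B := by
  rw [gradedDist_eq]
  refine le_limsup_of_frequently_le (Frequently.of_forall fun k => (term_bounds hn hC A B k).1)
    (isBoundedUnder_of ⟨2 * C, fun k => (term_bounds hn hC A B k).2⟩)

include hn hC in
lemma gradedDist_inf_le (A B A' B' : ∀ k, Submodule 𝕜 (V k)) :
    gradedDist n (fun k => A k ⊓ A' k) (fun k => B k ⊓ B' k)
      ≤ gradedDist n A B + gradedDist n A' B' := by
  rw [gradedDist_eq, gradedDist_eq, gradedDist_eq]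
  set u := fun k : ℕ => sdelta (A k) (B k) / (k : ℝ) ^ n with hu
  set v := fun k : ℕ => sdelta (A' k) (B' k) / (k : ℝ) ^ n with hv
  have hbu₁ : IsBoundedUnder (· ≥ ·) atTop u :=
    isBoundedUnder_of ⟨0, fun k => (term_bounds hn hC A B k).1⟩
  have hbu₂ : IsBoundedUnder (· ≤ ·) atTop u :=
    isBoundedUnder_of ⟨2 * C, fun k => (term_bounds hn hC A B k).2⟩
  have hbv₁ : IsBoundedUnder (· ≥ ·) atTop v :=
    isBoundedUnder_of ⟨0, fun k => (term_bounds hn hC A' B' k).1⟩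
  have hbv₂ : IsBoundedUnder (· ≤ ·) atTop v :=
    isBoundedUnder_of ⟨2 * C, fun k => (term_bounds hn hC A' B' k).2⟩
  have hinf : IsBoundedUnder (· ≥ ·) atTop
      (fun k : ℕ => sdelta ((fun k => A k ⊓ A' k) k) ((fun k => B k ⊓ B' k) k) / (k : ℝ) ^ n) :=
    isBoundedUnder_of ⟨0, fun k =>
      (term_bounds hn hC (fun k => A k ⊓ A' k) (fun k => B k ⊓ B' k) k).1⟩
  refine le_trans (limsup_le_limsup (Eventually.of_forall fun k => ?_)
      hinf.isCoboundedUnder_le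
      (isBoundedUnder_of ⟨2*C + 2*C, fun k => ?_⟩))
    (limsup_add_le hbu₁ hbu₂ hbv₁.isCoboundedUnder_le hbv₂)
  · show _ ≤ (u + v) k
    simp only [Pi.add_apply, hu, hv]
    rw [← add_div]
    rcases Nat.eq_zero_or_pos k with hk | hk
    · subst hk
      rw [show ((0:ℕ):ℝ) = 0 by norm_num, zero_pow (by omega : n ≠ 0), div_zero, div_zero]
    · exact div_le_div_of_nonneg_right (sdelta_inf_le _ _ _ _) (by positivity)
  · show (u + v) k ≤ _
    exact add_le_add (term_bounds hn hC A B k).2 (term_bounds hn hC A' B' k).2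

include hn hC in
lemma gradedDist_sup_le (A B A' B' : ∀ k, Submodule 𝕜 (V k)) :
    gradedDist n (fun k => A k ⊔ A' k) (fun k => B k ⊔ B' k)
      ≤ gradedDist n A B + gradedDist n A' B' := by
  rw [gradedDist_eq, gradedDist_eq, gradedDist_eq]
  set u := fun k : ℕ => sdelta (A k) (B k) / (k : ℝ) ^ n with hu
  set v := fun k : ℕ => sdelta (A' k) (B' k) / (k : ℝ) ^ n with hv
  have hbu₁ : IsBoundedUnder (· ≥ ·) atTop u :=
    isBoundedUnder_of ⟨0, fun k => (term_bounds hn hC A B k).1⟩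
  have hbu₂ : IsBoundedUnder (· ≤ ·) atTop u :=
    isBoundedUnder_of ⟨2 * C, fun k => (term_bounds hn hC A B k).2⟩
  have hbv₁ : IsBoundedUnder (· ≥ ·) atTop v :=
    isBoundedUnder_of ⟨0, fun k => (term_bounds hn hC A' B' k).1⟩
  have hbv₂ : IsBoundedUnder (· ≤ ·) atTop v :=
    isBoundedUnder_of ⟨2 * C, fun k => (term_bounds hn hC A' B' k).2⟩
  have hinf : IsBoundedUnder (· ≥ ·) atTop
      (fun k : ℕ => sdelta ((fun k => A k ⊔ A' k) k) ((fun k => B k ⊔ B' k) k) / (k : ℝ) ^ n) :=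
    isBoundedUnder_of ⟨0, fun k =>
      (term_bounds hn hC (fun k => A k ⊔ A' k) (fun k => B k ⊔ B' k) k).1⟩
  refine le_trans (limsup_le_limsup (Eventually.of_forall fun k => ?_)
      hinf.isCoboundedUnder_le
      (isBoundedUnder_of ⟨2*C + 2*C, fun k => ?_⟩))
    (limsup_add_le hbu₁ hbu₂ hbv₁.isCoboundedUnder_le hbv₂)
  · show _ ≤ (u + v) k
    simp only [Pi.add_apply, hu, hv]
    rw [← add_div]
    rcases Nat.eq_zero_or_pos k with hk | hk
    · subst hk
      rw [show ((0:ℕ):ℝ) = 0 by norm_num, zero_pow (by omega : n ≠ 0), div_zero, div_zero]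
    · exact div_le_div_of_nonneg_right (sdelta_sup_le _ _ _ _) (by positivity)
  · show (u + v) k ≤ _
    exact add_le_add (term_bounds hn hC A B k).2 (term_bounds hn hC A' B' k).2


end Main

theorem stmt6 {𝕜 : Type*} [Field 𝕜] {V : ℕ → Type*}
    [∀ k, AddCommGroup (V k)] [∀ k, Module 𝕜 (V k)] [∀ k, FiniteDimensional 𝕜 (V k)]
    (n : ℕ) (hn : 1 ≤ n)
    (hbdd : ∃ C : ℝ, ∀ k : ℕ, 1 ≤ k → (Module.finrank 𝕜 (V k) : ℝ) ≤ C * (k : ℝ) ^ n)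
    (Wseq Vseq : ℕ → ∀ k, Submodule 𝕜 (V k)) (W Vlim : ∀ k, Submodule 𝕜 (V k))
    (hW : Tendsto (fun i => gradedDist n (Wseq i) W) atTop (nhds 0))
    (hV : Tendsto (fun i => gradedDist n (Vseq i) Vlim) atTop (nhds 0)) :
    Tendsto (fun i => gradedDist n (fun k => Wseq i k ⊓ Vseq i k) (fun k => W k ⊓ Vlim k))
        atTop (nhds 0) ∧
    Tendsto (fun i => gradedDist n (fun k => Wseq i k ⊔ Vseq i k) (fun k => W k ⊔ Vlim k))
        atTop (nhds 0) := by
  obtain ⟨C, hC⟩ := hbdd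
  have key : ∀ (f g : ℕ → ℝ), (∀ i, 0 ≤ f i) → (∀ i, f i ≤ g i) →
      Tendsto g atTop (nhds 0) → Tendsto f atTop (nhds 0) := fun f g h1 h2 h3 =>
    squeeze_zero h1 h2 h3
  have hg0 : Tendsto (fun i => gradedDist n (Wseq i) W + gradedDist n (Vseq i) Vlim)
      atTop (nhds 0) := by simpa using hW.add hV
  constructor
  · exact key _ _ (fun i => gradedDist_nonneg hn hC _ _)
      (fun i => gradedDist_inf_le hn hC (Wseq i) W (Vseq i) Vlim) hg0
  · exact key _ _ (fun i => gradedDist_nonneg hn hC _ _)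
      (fun i => gradedDist_sup_le hn hC (Wseq i) W (Vseq i) Vlim) hg0
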